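/- With h the truncation of f(u) = u^m/(1+u^n) at V = (m/(n-m))^(1/n) (n > m > 1), A, B as in the theorem with A ≤ V ≤ B, and φ(γ) = γ^m(1+A^n)/(1+γ^n A^n): for every x ∈ [A, B] and γ ∈ [A/B, 1), h(γx)/h(x) ≥ φ(γ) if x ≤ V/γ, and h(γx)/h(x) ≥ 1 if x > V/γ. Consequently h(γx) ≥ min{φ(γ),1} · h(x). -/
import Mathlib

set_option maxHeartbeats 1000000


theorem stmt_14 (m n V A B : ℝ) (h φ : ℝ → ℝ) (hm : 1 < m) (hmn : m < n)
    (hV : V = (m / (n - m)) ^ (1 / n))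
    (hA : 0 < A) (hAV : A ≤ V) (hVB : V ≤ B)
    (hh : ∀ x : ℝ, 0 < x →
      h x = if x ≤ V then x ^ m / (1 + x ^ n) else V ^ m / (1 + V ^ n))
    (hφ : ∀ γ : ℝ, φ γ = γ ^ m * (1 + A ^ n) / (1 + γ ^ n * A ^ n)) :
    ∀ x γ : ℝ, A ≤ x → x ≤ B → A / B ≤ γ → γ < 1 →
      ((x ≤ V / γ → h (γ * x) / h x ≥ φ γ) ∧
       (x > V / γ → h (γ * x) / h x ≥ 1)) ∧
      h (γ * x) ≥ min (φ γ) 1 * h x := by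
  intro x γ hAx hxB hABγ hγ1
  have hn0 : (0:ℝ) < n := by linarith
  have hm0 : (0:ℝ) < m := by linarith
  have hnm0 : (0:ℝ) < n - m := by linarith
  have hK0 : (0:ℝ) < m / (n - m) := div_pos hm0 hnm0
  have hV0 : 0 < V := hV ▸ Real.rpow_pos_of_pos hK0 _
  have hVn : V ^ n = m / (n - m) := by
    rw [hV, ← Real.rpow_mul hK0.le, one_div, inv_mul_cancel₀ hn0.ne', Real.rpow_one]
  have hB0 : 0 < B := lt_of_lt_of_le hV0 hVB
  have hx0 : 0 < x := lt_of_lt_of_le hA hAx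
  have hγ0 : 0 < γ := lt_of_lt_of_le (div_pos hA hB0) hABγ
  have hγx0 : 0 < γ * x := mul_pos hγ0 hx0
  -- Bernoulli-type inequality
  have bern : ∀ t : ℝ, 0 ≤ t → n * t ^ m ≤ (n - m) + m * t ^ n := by
    intro t ht
    have h1 : (t ^ n) ^ (m / n) = t ^ m := by
      rw [← Real.rpow_mul ht]
      congr 1
      field_simp
    have htn0 : (0:ℝ) ≤ t ^ n := Real.rpow_nonneg ht n
    have h2 := rpow_one_add_le_one_add_mul_self (s := t ^ n - 1)
      (by linarith) (p := m / n) (by positivity) (by rw [div_le_one hn0]; linarith)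
    have e : 1 + (t ^ n - 1) = t ^ n := by ring
    rw [e, h1] at h2
    have h3 : n * (1 + m / n * (t ^ n - 1)) = (n - m) + m * t ^ n := by
      field_simp
      ring
    calc n * t ^ m ≤ n * (1 + m / n * (t ^ n - 1)) :=
          mul_le_mul_of_nonneg_left h2 hn0.le
      _ = (n - m) + m * t ^ n := h3
  -- monotonicity of f on (0, V]
  have fmono : ∀ a b : ℝ, 0 < a → a ≤ b → b ^ n ≤ m / (n - m) →
      a ^ m * (1 + b ^ n) ≤ b ^ m * (1 + a ^ n) := by
    intro a b ha hab hbK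
    have hb : 0 < b := lt_of_lt_of_le ha hab
    set t := a / b with htdef
    have ht0 : 0 < t := div_pos ha hb
    have ht1 : t ≤ 1 := (div_le_one hb).mpr hab
    have hbern := bern t ht0.le
    have htnm : t ^ n ≤ t ^ m := Real.rpow_le_rpow_of_exponent_ge ht0 ht1 hmn.le
    have hbm : (0:ℝ) < b ^ m := Real.rpow_pos_of_pos hb m
    have hbn : (0:ℝ) < b ^ n := Real.rpow_pos_of_pos hb n
    have ham : a ^ m = t ^ m * b ^ m := by
      rw [htdef, Real.div_rpow ha.le hb.le]
      field_simp
    have han : a ^ n = t ^ n * b ^ n := by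
      rw [htdef, Real.div_rpow ha.le hb.le]
      field_simp
    rw [ham, han]
    have key : b ^ n * (t ^ m - t ^ n) ≤ 1 - t ^ m := by
      have h1 : b ^ n * (t ^ m - t ^ n) ≤ m / (n - m) * (t ^ m - t ^ n) :=
        mul_le_mul_of_nonneg_right hbK (by linarith)
      have h2 : m / (n - m) * (t ^ m - t ^ n) ≤ 1 - t ^ m := by
        rw [div_mul_eq_mul_div, div_le_iff₀ hnm0]
        nlinarith [hbern]
      linarith
    nlinarith [mul_le_mul_of_nonneg_left key hbm.le]
  -- f attains its maximum at V
  have fmax : ∀ y : ℝ, V ≤ y → y ^ m * (1 + V ^ n) ≤ V ^ m * (1 + y ^ n) := by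
    intro y hVy
    have hy : 0 < y := lt_of_lt_of_le hV0 hVy
    set s := y / V with hsdef
    have hs0 : 0 < s := div_pos hy hV0
    have hbern := bern s hs0.le
    have hVm : (0:ℝ) < V ^ m := Real.rpow_pos_of_pos hV0 m
    have hVnp : (0:ℝ) < V ^ n := Real.rpow_pos_of_pos hV0 n
    have hym : y ^ m = s ^ m * V ^ m := by
      rw [hsdef, Real.div_rpow hy.le hV0.le]
      field_simp
    have hyn : y ^ n = s ^ n * V ^ n := by
      rw [hsdef, Real.div_rpow hy.le hV0.le]
      field_simp
    rw [hym, hyn]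
    have hKn : V ^ n * (n - m) = m := by
      rw [hVn]; field_simp
    have h1 : (n - m) * (s ^ m + V ^ n * s ^ m - 1 - V ^ n * s ^ n)
        = n * s ^ m - (n - m) - m * s ^ n := by
      linear_combination (s ^ m - s ^ n) * hKn
    have key : s ^ m + V ^ n * s ^ m - 1 - V ^ n * s ^ n ≤ 0 := by
      have h2 : (n - m) * (s ^ m + V ^ n * s ^ m - 1 - V ^ n * s ^ n) ≤ (n - m) * 0 := by
        rw [h1, mul_zero]; linarith
      exact le_of_mul_le_mul_left h2 hnm0
    nlinarith [mul_le_mul_of_nonneg_left key hVm.le]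
  have hγn1 : γ ^ n < 1 := Real.rpow_lt_one hγ0.le hγ1 hn0
  have hγm : (0:ℝ) < γ ^ m := Real.rpow_pos_of_pos hγ0 m
  have hγnp : (0:ℝ) < γ ^ n := Real.rpow_pos_of_pos hγ0 n
  have hAn : (0:ℝ) < A ^ n := Real.rpow_pos_of_pos hA n
  have compare : ∀ y : ℝ, A ≤ y →
      φ γ * (y ^ m / (1 + y ^ n)) ≤ γ ^ m * y ^ m / (1 + γ ^ n * y ^ n) := by
    intro y hAy
    have hy : 0 < y := lt_of_lt_of_le hA hAy
    have hyn : A ^ n ≤ y ^ n := Real.rpow_le_rpow hA.le hAy hn0.le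
    have hym : (0:ℝ) < y ^ m := Real.rpow_pos_of_pos hy m
    have hynp : (0:ℝ) < y ^ n := Real.rpow_pos_of_pos hy n
    rw [hφ, div_mul_div_comm, div_le_div_iff₀ (by positivity) (by positivity)]
    nlinarith [mul_nonneg (mul_nonneg hγm.le hym.le)
      (mul_nonneg (sub_nonneg.mpr hyn) (sub_nonneg.mpr hγn1.le))]
  have hVm : (0:ℝ) < V ^ m := Real.rpow_pos_of_pos hV0 m
  have hVnp : (0:ℝ) < V ^ n := Real.rpow_pos_of_pos hV0 n
  have hxm : (0:ℝ) < x ^ m := Real.rpow_pos_of_pos hx0 m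
  have hxn : (0:ℝ) < x ^ n := Real.rpow_pos_of_pos hx0 n
  have hhx_pos : 0 < h x := by
    rw [hh x hx0]
    split
    · exact div_pos hxm (by linarith)
    · exact div_pos hVm (by linarith)
  have hx_le_max : h x ≤ V ^ m / (1 + V ^ n) := by
    rw [hh x hx0]
    split
    · rename_i hxV
      rw [div_le_div_iff₀ (by linarith) (by linarith)]
      exact fmono x V hx0 hxV (le_of_eq hVn)
    · exact le_refl _
  have hmulrm : (γ * x) ^ m = γ ^ m * x ^ m := Real.mul_rpow hγ0.le hx0.le
  have hmulrn : (γ * x) ^ n = γ ^ n * x ^ n := Real.mul_rpow hγ0.le hx0.le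
  have P1 : x ≤ V / γ → φ γ * h x ≤ h (γ * x) := by
    intro hxVγ
    have hγxV : γ * x ≤ V := by
      rw [le_div_iff₀ hγ0] at hxVγ
      linarith
    rw [hh _ hγx0, if_pos hγxV, hmulrm, hmulrn, hh x hx0]
    split
    · exact compare x hAx
    · rename_i hxV
      push_neg at hxV
      have step1 : φ γ * (V ^ m / (1 + V ^ n)) ≤ γ ^ m * V ^ m / (1 + γ ^ n * V ^ n) :=
        compare V hAV
      have hγV0 : 0 < γ * V := mul_pos hγ0 hV0
      have hγVγx : γ * V ≤ γ * x := by nlinarith [hxV.le]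
      have hγxnV : (γ * x) ^ n ≤ m / (n - m) := by
        rw [← hVn]
        exact Real.rpow_le_rpow hγx0.le hγxV hn0.le
      have step2' := fmono (γ * V) (γ * x) hγV0 hγVγx hγxnV
      have hγVm : (0:ℝ) < (γ * V) ^ m := Real.rpow_pos_of_pos hγV0 m
      have hγVn : (0:ℝ) < (γ * V) ^ n := Real.rpow_pos_of_pos hγV0 n
      have hγxn : (0:ℝ) < (γ * x) ^ n := Real.rpow_pos_of_pos hγx0 n
      have step2 : (γ * V) ^ m / (1 + (γ * V) ^ n) ≤ (γ * x) ^ m / (1 + (γ * x) ^ n) := by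
        rw [div_le_div_iff₀ (by linarith) (by linarith)]
        exact step2'
      rw [Real.mul_rpow hγ0.le hV0.le, Real.mul_rpow hγ0.le hV0.le, hmulrm, hmulrn] at step2
      exact le_trans step1 step2
  have P2 : x > V / γ → h x ≤ h (γ * x) := by
    intro hxVγ
    have hγxV : ¬ (γ * x ≤ V) := by
      rw [gt_iff_lt, div_lt_iff₀ hγ0] at hxVγ
      push_neg
      linarith
    rw [hh _ hγx0, if_neg hγxV]
    exact hx_le_max
  refine ⟨⟨?_, ?_⟩, ?_⟩
  · intro hc
    rw [ge_iff_le, le_div_iff₀ hhx_pos]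
    exact P1 hc
  · intro hc
    rw [ge_iff_le, le_div_iff₀ hhx_pos, one_mul]
    exact P2 hc
  · by_cases hc : x ≤ V / γ
    · calc min (φ γ) 1 * h x ≤ φ γ * h x :=
            mul_le_mul_of_nonneg_right (min_le_left _ _) hhx_pos.le
        _ ≤ h (γ * x) := P1 hc
    · push_neg at hc
      calc min (φ γ) 1 * h x ≤ 1 * h x :=
            mul_le_mul_of_nonneg_right (min_le_right _ _) hhx_pos.le
        _ = h x := one_mul _
        _ ≤ h (γ * x) := P2 hc
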